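/- Let ε > 0, let N ≥ 1 be an integer, and let x be a strictly ordered particle solution on [0,∞). Then for every index i = 0,…,N−1 and every t ≥ 0, d_i(t) ≥ d_i(0)·e^{−t/(2ε³)} + (2ε/N)·(1 − e^{−t/(2ε³)}); in particular the particles never collide at finite times. -/

import Mathlib

open MeasureTheory Real Set
open scoped ENNReal

/-- Scaled Morse potential `W_ε(x) = (1/(2ε)) e^{-|x|/ε}`. -/
noncomputable def Morse (ε x : ℝ) : ℝ := (1 / (2 * ε)) * Real.exp (-|x| / ε)

/-- Derivative of the scaled Morse potential,
`W_ε'(x) = -(1/(2ε²)) sign(x) e^{-|x|/ε}`. -/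
noncomputable def Morse' (ε x : ℝ) : ℝ :=
  -(1 / (2 * ε ^ 2)) * Real.sign x * Real.exp (-|x| / ε)

/-- Right-hand side of the particle ODE system:
`(1/N) ∑_{k=0}^{N-1} (W_ε(x_{k+1}-x_i) - W_ε(x_k-x_i))/(x_{k+1}-x_k)`. -/
noncomputable def particleRHS (ε : ℝ) (N : ℕ) (x : ℕ → ℝ) (i : ℕ) : ℝ :=
  (1 / (N : ℝ)) * ∑ k ∈ Finset.range N,
    (Morse ε (x (k + 1) - x i) - Morse ε (x k - x i)) / (x (k + 1) - x k)

/-- A strictly ordered particle solution on `[0,∞)`:  a differentiable curve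
`x = (x_0,…,x_N)` with `x_0(t) < ⋯ < x_N(t)` for all `t ≥ 0`, solving the particle ODE. -/
def IsParticleSol (ε : ℝ) (N : ℕ) (x : ℝ → ℕ → ℝ) : Prop :=
  (∀ t : ℝ, 0 ≤ t → ∀ i < N, x t i < x t (i + 1)) ∧
  (∀ i ≤ N, ∀ t : ℝ, 0 ≤ t →
    HasDerivWithinAt (fun s => x s i) (particleRHS ε N (x t) i) (Set.Ici 0) t)

/-- The discrete (piecewise constant) density
`ρ^N(y,t) = ∑_{k=0}^{N-1} R_k(t) 1_{[x_k(t), x_{k+1}(t))}(y)` with `R_k = 1/(N d_k)`. -/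
noncomputable def discDens (N : ℕ) (x : ℝ → ℕ → ℝ) (y t : ℝ) : ℝ :=
  ∑ k ∈ Finset.range N,
    Set.indicator (Set.Ico (x t k) (x t (k + 1)))
      (fun _ => 1 / ((N : ℝ) * (x t (k + 1) - x t k))) y

/-- Convolution in the space variable: `(W ∗ ρ)(x) = ∫ W(x-y) ρ(y) dy`. -/
noncomputable def conv (W ρ : ℝ → ℝ) (x : ℝ) : ℝ := ∫ y, W (x - y) * ρ y


lemma one_sub_exp_neg_le {s : ℝ} : 1 - Real.exp (-s) ≤ s := by
  nlinarith [Real.add_one_le_exp (-s)]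

lemma exp_neg_le_quad {s : ℝ} (hs : 0 ≤ s) : Real.exp (-s) ≤ 1 - s + s ^ 2 / 2 := by
  have h1 := Real.quadratic_le_exp_of_nonneg hs
  have h2 : Real.exp (-s) * Real.exp s = 1 := by rw [← Real.exp_add]; simp
  nlinarith [Real.exp_pos (-s), Real.exp_pos s, sq_nonneg s, sq_nonneg (s * s)]

lemma center_ge {ε r s : ℝ} (hε : 0 < ε) (hrs : r < s) :
    ((Morse ε (s - s) - Morse ε (r - s)) - (Morse ε (s - r) - Morse ε (r - r))) / (s - r)
      ≥ 1 / ε ^ 2 - (s - r) / (2 * ε ^ 3) := by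
  have hd : 0 < s - r := by linarith
  have hε' : ε ≠ 0 := ne_of_gt hε
  have h2 : |r - s| = s - r := by rw [abs_of_nonpos (by linarith)]; ring
  have h3 : |s - r| = s - r := abs_of_nonneg (by linarith)
  unfold Morse
  rw [h2, h3]
  simp only [neg_div, sub_self, abs_zero, neg_zero, zero_div, Real.exp_zero]
  set F := Real.exp (-((s - r) / ε)) with hF
  have key : 1 / ε ^ 2 - (s - r) / (2 * ε ^ 3) ≤ (1 - F) / (ε * (s - r)) := by
    rw [le_div_iff₀ (by positivity)]
    have expand : (1 / ε ^ 2 - (s - r) / (2 * ε ^ 3)) * (ε * (s - r))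
        = (s - r) / ε - ((s - r) / ε) ^ 2 / 2 := by field_simp
    rw [expand]
    have := exp_neg_le_quad (s := (s - r) / ε) (by positivity)
    linarith
  have eg : (1 / (2 * ε) * 1 - 1 / (2 * ε) * F - (1 / (2 * ε) * F - 1 / (2 * ε) * 1)) / (s - r)
      = (1 - F) / (ε * (s - r)) := by field_simp; ring
  rw [eg]
  exact key

lemma side_ge {ε p q r s : ℝ} (hε : 0 < ε) (hpq : p < q) (hrs : r < s)
    (h : s ≤ p ∨ q ≤ r) :
    ((Morse ε (q - s) - Morse ε (p - s)) - (Morse ε (q - r) - Morse ε (p - r))) / (q - p)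
      ≥ -((s - r) / (2 * ε ^ 3)) := by
  have hε' : ε ≠ 0 := ne_of_gt hε
  have hqp : 0 < q - p := by linarith
  have hsr : 0 < s - r := by linarith
  set E := Real.exp (-((q - p) / ε)) with hEdef
  set F := Real.exp (-((s - r) / ε)) with hFdef
  have hE1 : 1 - E ≤ (q - p) / ε := one_sub_exp_neg_le
  have hF1 : 1 - F ≤ (s - r) / ε := one_sub_exp_neg_le
  have hE0 : 0 ≤ 1 - E := by
    have : E ≤ 1 := by
      rw [hEdef]; exact Real.exp_le_one_iff.mpr (neg_nonpos.mpr (div_nonneg (by linarith) hε.le))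
    linarith
  have hF0 : 0 ≤ 1 - F := by
    have : F ≤ 1 := by
      rw [hFdef]; exact Real.exp_le_one_iff.mpr (neg_nonpos.mpr (div_nonneg (by linarith) hε.le))
    linarith
  have c2 : (1 - E) * (1 - F) ≤ (q - p) / ε * ((s - r) / ε) :=
    mul_le_mul hE1 hF1 hF0 (by positivity)
  rcases h with h | h
  · -- all arguments nonneg
    set A := Real.exp (-((p - s) / ε)) with hAdef
    have hA0 : 0 < A := Real.exp_pos _
    have hA1 : A ≤ 1 := by
      rw [hAdef]
      exact Real.exp_le_one_iff.mpr (neg_nonpos.mpr (div_nonneg (by linarith) hε.le))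
    have e1 : Real.exp (-|q - s| / ε) = A * E := by
      rw [abs_of_nonneg (by linarith), hAdef, hEdef, ← Real.exp_add]
      congr 1; field_simp; try ring
    have e2 : Real.exp (-|p - s| / ε) = A := by
      rw [abs_of_nonneg (by linarith), hAdef]; congr 1; ring
    have e3 : Real.exp (-|q - r| / ε) = A * E * F := by
      rw [abs_of_nonneg (by linarith), hAdef, hEdef, hFdef, ← Real.exp_add, ← Real.exp_add]
      congr 1; field_simp; try ring
    have e4 : Real.exp (-|p - r| / ε) = A * F := by
      rw [abs_of_nonneg (by linarith), hAdef, hFdef, ← Real.exp_add]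
      congr 1; field_simp; try ring
    unfold Morse
    rw [e1, e2, e3, e4, ge_iff_le, le_div_iff₀ hqp]
    have expand : -((s - r) / (2 * ε ^ 3)) * (q - p)
        = 1 / (2 * ε) * (-((q - p) / ε * ((s - r) / ε))) := by field_simp
    rw [expand]
    have c1 : A * ((1 - E) * (1 - F)) ≤ 1 * ((1 - E) * (1 - F)) :=
      mul_le_mul_of_nonneg_right hA1 (mul_nonneg hE0 hF0)
    have c3 : A * ((1 - E) * (1 - F)) ≤ (q - p) / ε * ((s - r) / ε) := by linarith
    have c4 : -((q - p) / ε * ((s - r) / ε)) ≤ -(A * ((1 - E) * (1 - F))) := by linarith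
    have hfin := mul_le_mul_of_nonneg_left c4 (by positivity : (0:ℝ) ≤ 1 / (2 * ε))
    nlinarith [hfin]
  · -- all arguments nonpos
    set A := Real.exp (-((r - q) / ε)) with hAdef
    have hA0 : 0 < A := Real.exp_pos _
    have hA1 : A ≤ 1 := by
      rw [hAdef]
      exact Real.exp_le_one_iff.mpr (neg_nonpos.mpr (div_nonneg (by linarith) hε.le))
    have e1 : Real.exp (-|q - s| / ε) = A * F := by
      rw [abs_of_nonpos (by linarith), hAdef, hFdef, ← Real.exp_add]
      congr 1; field_simp; try ring
    have e2 : Real.exp (-|p - s| / ε) = A * E * F := by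
      rw [abs_of_nonpos (by linarith), hAdef, hEdef, hFdef, ← Real.exp_add, ← Real.exp_add]
      congr 1; field_simp; try ring
    have e3 : Real.exp (-|q - r| / ε) = A := by
      rw [abs_of_nonpos (by linarith), hAdef]; congr 1; ring
    have e4 : Real.exp (-|p - r| / ε) = A * E := by
      rw [abs_of_nonpos (by linarith), hAdef, hEdef, ← Real.exp_add]
      congr 1; field_simp; try ring
    unfold Morse
    rw [e1, e2, e3, e4, ge_iff_le, le_div_iff₀ hqp]
    have expand : -((s - r) / (2 * ε ^ 3)) * (q - p)
        = 1 / (2 * ε) * (-((q - p) / ε * ((s - r) / ε))) := by field_simp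
    rw [expand]
    have c1 : A * ((1 - E) * (1 - F)) ≤ 1 * ((1 - E) * (1 - F)) :=
      mul_le_mul_of_nonneg_right hA1 (mul_nonneg hE0 hF0)
    have c4 : -((q - p) / ε * ((s - r) / ε)) ≤ -(A * ((1 - E) * (1 - F))) := by linarith
    have hfin := mul_le_mul_of_nonneg_left c4 (by positivity : (0:ℝ) ≤ 1 / (2 * ε))
    nlinarith [hfin]

lemma idx_mono (N : ℕ) (y : ℕ → ℝ) (hord : ∀ j < N, y j < y (j + 1)) :
    ∀ j k, j ≤ k → k ≤ N → y j ≤ y k := by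
  intro j k hjk hkN
  induction k with
  | zero => simp [Nat.le_zero.mp hjk]
  | succ n ih =>
    rcases Nat.eq_or_lt_of_le hjk with h | h
    · rw [h]
    · exact le_trans (ih (by omega) (by omega)) (le_of_lt (hord n (by omega)))

lemma rhs_diff_ge {ε : ℝ} (hε : 0 < ε) {N : ℕ} (hN : 1 ≤ N) (y : ℕ → ℝ)
    (hord : ∀ j < N, y j < y (j + 1)) {i : ℕ} (hi : i < N) :
    particleRHS ε N y (i + 1) - particleRHS ε N y i
      ≥ 1 / (N * ε ^ 2) - (y (i + 1) - y i) / (2 * ε ^ 3) := by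
  have hmono := idx_mono N y hord
  have hNpos : (0:ℝ) < N := by exact_mod_cast Nat.pos_of_ne_zero (by omega)
  unfold particleRHS
  rw [← mul_sub, ← Finset.sum_sub_distrib]
  have key : ∀ k ∈ Finset.range N,
      ((if k = i then 1 / ε ^ 2 else 0) - (y (i + 1) - y i) / (2 * ε ^ 3))
        ≤ (Morse ε (y (k + 1) - y (i + 1)) - Morse ε (y k - y (i + 1))) / (y (k + 1) - y k)
          - (Morse ε (y (k + 1) - y i) - Morse ε (y k - y i)) / (y (k + 1) - y k) := by
    intro k hk
    rw [Finset.mem_range] at hk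
    rw [div_sub_div_same]
    by_cases hki : k = i
    · subst hki
      simp only [if_pos rfl]
      exact center_ge hε (hord k hk)
    · simp only [if_neg hki, zero_sub]
      apply side_ge hε (hord k hk) (hord i hi)
      rcases Nat.lt_or_ge k i with h | h
      · right; exact hmono (k + 1) i (by omega) (by omega)
      · left; exact hmono (i + 1) k (by omega) (by omega)
  have hsum := Finset.sum_le_sum key
  have hsumval : ∑ k ∈ Finset.range N,
      ((if k = i then 1 / ε ^ 2 else 0) - (y (i + 1) - y i) / (2 * ε ^ 3))
      = 1 / ε ^ 2 - N * ((y (i + 1) - y i) / (2 * ε ^ 3)) := by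
    rw [Finset.sum_sub_distrib, Finset.sum_ite_eq' (Finset.range N) i (fun _ => 1 / ε ^ 2)]
    simp [Finset.mem_range.mpr hi, Finset.sum_const, Finset.card_range, nsmul_eq_mul]
  rw [hsumval] at hsum
  have hmul := mul_le_mul_of_nonneg_left hsum (by positivity : (0:ℝ) ≤ 1 / (N : ℝ))
  have heq : 1 / (N : ℝ) * (1 / ε ^ 2 - N * ((y (i + 1) - y i) / (2 * ε ^ 3)))
      = 1 / ((N : ℝ) * ε ^ 2) - (y (i + 1) - y i) / (2 * ε ^ 3) := by
    field_simp
  rw [heq] at hmul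
  exact hmul

/-- Particles do not collide. For a strictly ordered particle
solution, `d_i(t) ≥ d_i(0) e^{-t/(2ε³)} + (2ε/N)(1 - e^{-t/(2ε³)})` for all `t ≥ 0`;
in particular consecutive particles stay at positive distance at all finite times. -/
theorem stmt3 (ε : ℝ) (hε : 0 < ε) (N : ℕ) (hN : 1 ≤ N) (x : ℝ → ℕ → ℝ)
    (hx : IsParticleSol ε N x) :
    (∀ t : ℝ, 0 ≤ t → ∀ i < N,
      x t (i + 1) - x t i ≥
        (x 0 (i + 1) - x 0 i) * Real.exp (-t / (2 * ε ^ 3)) +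
          (2 * ε / N) * (1 - Real.exp (-t / (2 * ε ^ 3)))) ∧
    (∀ t : ℝ, 0 ≤ t → ∀ i < N, 0 < x t (i + 1) - x t i) := by
  have hNpos : (0:ℝ) < N := by exact_mod_cast Nat.pos_of_ne_zero (by omega)
  refine ⟨?_, fun t ht i hi => sub_pos.2 (hx.1 t ht i hi)⟩
  intro t ht i hi
  set c : ℝ := 1 / (2 * ε ^ 3) with hc
  have hcpos : 0 < c := by rw [hc]; positivity
  set K : ℝ := 2 * ε / N with hK
  set φ : ℝ → ℝ := fun s => (x s (i + 1) - x s i) * Real.exp (c * s)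
      - K * (Real.exp (c * s) - 1) with hφ
  set ψ : ℝ → ℝ := fun s =>
      ((particleRHS ε N (x s) (i + 1) - particleRHS ε N (x s) i) * Real.exp (c * s)
        + (x s (i + 1) - x s i) * (c * Real.exp (c * s)))
      - K * (c * Real.exp (c * s)) with hψ
  have hexp : ∀ s : ℝ, HasDerivAt (fun u => Real.exp (c * u)) (c * Real.exp (c * s)) s := by
    intro s
    have h1 : HasDerivAt (fun u : ℝ => c * u) (c * 1) s := (hasDerivAt_id s).const_mul c
    have h2 : HasDerivAt (fun u => Real.exp (c * u)) (Real.exp (c * s) * (c * 1)) s :=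
      (Real.hasDerivAt_exp (c * s)).comp s h1
    convert h2 using 1
    ring
  have hD : ∀ s ∈ Set.Ici (0:ℝ), HasDerivWithinAt (fun u => x u (i + 1) - x u i)
      (particleRHS ε N (x s) (i + 1) - particleRHS ε N (x s) i) (Set.Ici 0) s :=
    fun s hs => (hx.2 (i + 1) (by omega) s hs).sub (hx.2 i (by omega) s hs)
  have hφ' : ∀ s ∈ Set.Ici (0:ℝ), HasDerivWithinAt φ (ψ s) (Set.Ici 0) s := by
    intro s hs
    exact ((hD s hs).mul (hexp s).hasDerivWithinAt).sub
      (((hexp s).hasDerivWithinAt.sub_const 1).const_mul K)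
  have hψ0 : ∀ s ∈ Set.Ici (0:ℝ), 0 ≤ ψ s := by
    intro s hs
    have hrhs := rhs_diff_ge hε hN (x s) (fun j hj => hx.1 s hs j hj) hi
    have hKc : K * c = 1 / ((N : ℝ) * ε ^ 2) := by
      rw [hK, hc]; field_simp
    have hbr : 0 ≤ (particleRHS ε N (x s) (i + 1) - particleRHS ε N (x s) i)
        + c * (x s (i + 1) - x s i) - K * c := by
      rw [hKc, hc]
      have : (1 : ℝ) / (2 * ε ^ 3) * (x s (i + 1) - x s i)
          = (x s (i + 1) - x s i) / (2 * ε ^ 3) := by ring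
      rw [this]
      linarith [hrhs]
    have hfac : ψ s = ((particleRHS ε N (x s) (i + 1) - particleRHS ε N (x s) i)
        + c * (x s (i + 1) - x s i) - K * c) * Real.exp (c * s) := by
      rw [hψ]; ring
    rw [hfac]
    exact mul_nonneg hbr (Real.exp_pos _).le
  have hmono : MonotoneOn φ (Set.Ici 0) := by
    apply monotoneOn_of_hasDerivWithinAt_nonneg (convex_Ici 0)
      (fun s hs => (hφ' s hs).continuousWithinAt) (f' := ψ)
    · intro s hs
      simp only [interior_Ici] at hs ⊢
      exact (hφ' s (Set.Ioi_subset_Ici_self hs)).mono Set.Ioi_subset_Ici_self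
    · intro s hs
      simp only [interior_Ici] at hs
      exact hψ0 s (Set.Ioi_subset_Ici_self hs)
  have h0t : φ 0 ≤ φ t := hmono Set.self_mem_Ici ht ht
  have hφ0 : φ 0 = x 0 (i + 1) - x 0 i := by simp [hφ]
  rw [hφ0] at h0t
  -- now convert
  have het : Real.exp (-t / (2 * ε ^ 3)) = Real.exp (-(c * t)) := by
    congr 1; rw [hc]; ring
  rw [ge_iff_le, het]
  have hprod : Real.exp (c * t) * Real.exp (-(c * t)) = 1 := by
    rw [← Real.exp_add]; simp
  have hϕt : φ t = (x t (i + 1) - x t i) * Real.exp (c * t) - K * (Real.exp (c * t) - 1) := rfl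
  rw [hϕt] at h0t
  have h2 := mul_le_mul_of_nonneg_right h0t (Real.exp_pos (-(c * t))).le
  have h3 : ((x t (i + 1) - x t i) * Real.exp (c * t) - K * (Real.exp (c * t) - 1))
        * Real.exp (-(c * t))
      = (x t (i + 1) - x t i) - K + K * Real.exp (-(c * t)) := by
    linear_combination (x t (i + 1) - x t i - K) * hprod
  rw [h3] at h2
  linarith
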